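/- Discrete Gronwall inequality: Let τ > 0, let N be a natural number, let B, K ≥ 0, and let (y_n), (h_n), (g_n), (f_n) be nonnegative real sequences such that y_m + τ·∑_{n=0}^{m} h_n ≤ B + τ·∑_{n=0}^{m} (g_n·y_n + f_n) for every m with 0 ≤ m ≤ N, that τ·∑_{n=0}^{N} g_n ≤ K, and that τ·g_n < 1 for every n with 0 ≤ n ≤ N. Set ρ = max_{0 ≤ n ≤ N} (1 − τ·g_n)^{-1}. Then y_m + τ·∑_{n=0}^{m} h_n ≤ exp(ρ·K)·(B + τ·∑_{n=0}^{m} f_n) for every m with 0 ≤ m ≤ N. -/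

import Mathlib

namespace DiscreteGronwallPaper

/-- Discrete Gronwall inequality (Lemma 2.2). -/
theorem discrete_gronwall
    (τ : ℝ) (hτ : 0 < τ) (N : ℕ) (B K : ℝ) (hB : 0 ≤ B) (hK : 0 ≤ K)
    (y h g f : ℕ → ℝ)
    (hy : ∀ n, 0 ≤ y n) (hh : ∀ n, 0 ≤ h n) (hg : ∀ n, 0 ≤ g n) (hf : ∀ n, 0 ≤ f n)
    (hmain : ∀ m ≤ N, y m + τ * ∑ n ∈ Finset.range (m + 1), h n ≤
      B + τ * ∑ n ∈ Finset.range (m + 1), (g n * y n + f n))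
    (hgK : τ * ∑ n ∈ Finset.range (N + 1), g n ≤ K)
    (hg1 : ∀ n ≤ N, τ * g n < 1)
    (ρ : ℝ)
    (hρ : ρ = (Finset.range (N + 1)).sup' (Finset.nonempty_range_add_one)
      (fun n => (1 - τ * g n)⁻¹)) :
    ∀ m ≤ N, y m + τ * ∑ n ∈ Finset.range (m + 1), h n ≤
      Real.exp (ρ * K) * (B + τ * ∑ n ∈ Finset.range (m + 1), f n) := by
  set E : ℕ → ℝ := fun m => y m + τ * ∑ n ∈ Finset.range (m + 1), h n with hEdef
  set S : ℕ → ℝ := fun m => B + τ * ∑ n ∈ Finset.range (m + 1), f n with hSdef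
  set Q : ℕ → ℝ := fun m => ∏ n ∈ Finset.range m, (1 - τ * g n)⁻¹ with hQdef
  have hpos : ∀ n ≤ N, 0 < 1 - τ * g n := by
    intro n hn; linarith [hg1 n hn]
  have hinv_pos : ∀ n ≤ N, 0 < (1 - τ * g n)⁻¹ := fun n hn => inv_pos.mpr (hpos n hn)
  have hQpos : ∀ m ≤ N + 1, 0 < Q m := by
    intro m hm
    apply Finset.prod_pos
    intro n hn
    have := Finset.mem_range.mp hn
    exact hinv_pos n (by omega)
  have hQsucc : ∀ m, Q (m + 1) = Q m * (1 - τ * g m)⁻¹ := by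
    intro m; simp only [hQdef]; rw [Finset.prod_range_succ]
  -- key identity: Q m = 1 + τ * ∑_{n<m} g n * Q (n+1)
  have hQid : ∀ m ≤ N + 1, Q m = 1 + τ * ∑ n ∈ Finset.range m, g n * Q (n + 1) := by
    intro m
    induction m with
    | zero => intro _; simp [hQdef]
    | succ m ih =>
      intro hm
      have hmN : m ≤ N := by omega
      have hne : (1 - τ * g m) ≠ 0 := ne_of_gt (hpos m hmN)
      have hstep : Q (m + 1) = Q m + τ * g m * Q (m + 1) := by
        rw [hQsucc m]
        field_simp
        ring
      rw [Finset.sum_range_succ]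
      linear_combination hstep + ih (by omega)
  -- monotonicity of S
  have hSmono : ∀ {n m : ℕ}, n ≤ m → S n ≤ S m := by
    intro n m hnm
    simp only [hSdef]
    have : ∑ k ∈ Finset.range (n + 1), f k ≤ ∑ k ∈ Finset.range (m + 1), f k := by
      apply Finset.sum_le_sum_of_subset_of_nonneg
      · exact Finset.range_subset_range.mpr (by omega)
      · intro i _ _; exact hf i
    nlinarith
  have hSnonneg : ∀ m, 0 ≤ S m := by
    intro m
    have : 0 ≤ ∑ k ∈ Finset.range (m + 1), f k := Finset.sum_nonneg fun i _ => hf i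
    simp only [hSdef]
    nlinarith
  -- main induction
  have key : ∀ m, m ≤ N → E m ≤ Q (m + 1) * S m := by
    intro m
    induction m using Nat.strong_induction_on with
    | _ m ih =>
      intro hm
      have h1 : E m ≤ S m + τ * ∑ n ∈ Finset.range (m + 1), g n * y n := by
        have := hmain m hm
        rw [Finset.sum_add_distrib] at this
        simp only [hEdef, hSdef]
        nlinarith
      have h2 : ∑ n ∈ Finset.range m, g n * y n ≤
          ∑ n ∈ Finset.range m, g n * (Q (n + 1) * S m) := by
        apply Finset.sum_le_sum
        intro n hn
        have hnm : n < m := Finset.mem_range.mp hn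
        have hyE : y n ≤ E n := by
          have : 0 ≤ ∑ k ∈ Finset.range (n + 1), h k := Finset.sum_nonneg fun i _ => hh i
          simp only [hEdef]; nlinarith
        have hQn : 0 < Q (n + 1) := hQpos (n + 1) (by omega)
        have : y n ≤ Q (n + 1) * S m :=
          le_trans hyE (le_trans (ih n hnm (by omega))
            (mul_le_mul_of_nonneg_left (hSmono (by omega)) hQn.le))
        exact mul_le_mul_of_nonneg_left this (hg n)
      have hymEm : y m ≤ E m := by
        have : 0 ≤ ∑ k ∈ Finset.range (m + 1), h k := Finset.sum_nonneg fun i _ => hh i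
        simp only [hEdef]; nlinarith
      have h3 : E m * (1 - τ * g m) ≤ S m * Q m := by
        rw [Finset.sum_range_succ] at h1
        have hQm : Q m = 1 + τ * ∑ n ∈ Finset.range m, g n * Q (n + 1) :=
          hQid m (by omega)
        have hgm : 0 ≤ τ * g m := mul_nonneg hτ.le (hg m)
        have e : S m * (τ * ∑ n ∈ Finset.range m, g n * Q (n + 1))
            = τ * ∑ n ∈ Finset.range m, g n * (Q (n + 1) * S m) := by
          simp only [Finset.mul_sum]
          apply Finset.sum_congr rfl
          intro n _; ring
        have hsum : τ * ∑ n ∈ Finset.range m, g n * y n ≤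
            S m * (τ * ∑ n ∈ Finset.range m, g n * Q (n + 1)) := by
          rw [e]
          exact mul_le_mul_of_nonneg_left h2 hτ.le
        have hSQ : S m * Q m = S m + S m * (τ * ∑ n ∈ Finset.range m, g n * Q (n + 1)) := by
          rw [hQm]; ring
        rw [mul_add, ← mul_assoc] at h1
        have hEexp : E m * (1 - τ * g m) = E m - τ * g m * E m := by ring
        rw [hEexp, hSQ]
        linarith [mul_le_mul_of_nonneg_left hymEm hgm, hsum, h1]
      have hQmpos : 0 < Q m := hQpos m (by omega)
      have hd := hpos m hm
      calc E m = E m * (1 - τ * g m) * (1 - τ * g m)⁻¹ := by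
            field_simp
        _ ≤ S m * Q m * (1 - τ * g m)⁻¹ :=
            mul_le_mul_of_nonneg_right h3 (inv_pos.mpr hd).le
        _ = Q (m + 1) * S m := by rw [hQsucc m]; ring
  -- bound Q by exp
  have hρ_ge : ∀ n ≤ N, (1 - τ * g n)⁻¹ ≤ ρ := by
    intro n hn
    rw [hρ]
    exact Finset.le_sup' (fun n => (1 - τ * g n)⁻¹) (Finset.mem_range.mpr (Nat.lt_succ_of_le hn))
  have hρ1 : (1 : ℝ) ≤ ρ := by
    have h0 : (1 - τ * g 0)⁻¹ ≤ ρ := hρ_ge 0 (Nat.zero_le N)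
    have : (1 : ℝ) ≤ (1 - τ * g 0)⁻¹ := by
      have := hpos 0 (Nat.zero_le N)
      have hle : 1 - τ * g 0 ≤ 1 := by nlinarith [hg 0, hτ.le]
      exact one_le_inv_iff₀.mpr ⟨this, hle⟩
    linarith
  have hρ0 : (0 : ℝ) ≤ ρ := by linarith
  intro m hm
  have hQexp : Q (m + 1) ≤ Real.exp (ρ * K) := by
    have hprod : Q (m + 1) ≤ ∏ n ∈ Finset.range (m + 1), Real.exp (ρ * (τ * g n)) := by
      apply Finset.prod_le_prod
      · intro n hn
        have := Finset.mem_range.mp hn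
        exact (hinv_pos n (by omega)).le
      · intro n hn
        have hnN : n ≤ N := by
          have := Finset.mem_range.mp hn; omega
        have hd := hpos n hnN
        have h4 : (1 - τ * g n)⁻¹ = 1 + τ * g n * (1 - τ * g n)⁻¹ := by
          field_simp
          ring
        have h5 : τ * g n * (1 - τ * g n)⁻¹ ≤ τ * g n * ρ :=
          mul_le_mul_of_nonneg_left (hρ_ge n hnN) (mul_nonneg hτ.le (hg n))
        calc (1 - τ * g n)⁻¹ = 1 + τ * g n * (1 - τ * g n)⁻¹ := h4
          _ ≤ 1 + ρ * (τ * g n) := by nlinarith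
          _ ≤ Real.exp (ρ * (τ * g n)) := by
              have := Real.add_one_le_exp (ρ * (τ * g n)); linarith
    have hsum : ∏ n ∈ Finset.range (m + 1), Real.exp (ρ * (τ * g n)) =
        Real.exp (∑ n ∈ Finset.range (m + 1), ρ * (τ * g n)) := by
      rw [Real.exp_sum]
    have hle2 : ∑ n ∈ Finset.range (m + 1), ρ * (τ * g n) ≤ ρ * K := by
      have h6 : ∑ n ∈ Finset.range (m + 1), ρ * (τ * g n) =
          ρ * (τ * ∑ n ∈ Finset.range (m + 1), g n) := by
        rw [Finset.mul_sum, Finset.mul_sum]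
      rw [h6]
      apply mul_le_mul_of_nonneg_left _ hρ0
      have hsub : τ * ∑ n ∈ Finset.range (m + 1), g n ≤
          τ * ∑ n ∈ Finset.range (N + 1), g n := by
        apply mul_le_mul_of_nonneg_left _ hτ.le
        apply Finset.sum_le_sum_of_subset_of_nonneg
        · exact Finset.range_subset_range.mpr (by omega)
        · intro i _ _; exact hg i
      linarith
    calc Q (m + 1) ≤ ∏ n ∈ Finset.range (m + 1), Real.exp (ρ * (τ * g n)) := hprod
      _ = Real.exp (∑ n ∈ Finset.range (m + 1), ρ * (τ * g n)) := hsum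
      _ ≤ Real.exp (ρ * K) := Real.exp_le_exp.mpr hle2
  calc y m + τ * ∑ n ∈ Finset.range (m + 1), h n = E m := rfl
    _ ≤ Q (m + 1) * S m := key m hm
    _ ≤ Real.exp (ρ * K) * S m :=
        mul_le_mul_of_nonneg_right hQexp (hSnonneg m)
    _ = Real.exp (ρ * K) * (B + τ * ∑ n ∈ Finset.range (m + 1), f n) := rfl

end DiscreteGronwallPaper
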